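/- Let k be a field and V a two-dimensional k-vector space with basis {a, b}. Let θ : V ⊗ V → V be a bilinear multiplication (written xy) that is commutative (xy = yx for all x, y ∈ V) and satisfies a·a = b and b·b = a. Then (V, θ) satisfies the Jordan identity ((x·x)·y)·x = (x·x)·(y·x) for all x, y ∈ V if and only if θ is associative, i.e. (x·y)·z = x·(y·z) for all x, y, z ∈ V. -/

import Mathlib

/-- **Theorem 2.1 (Nichita).** Let `V` be a two-dimensional vector space over a field `k`
with basis `{a, b}` (here `a = B 0`, `b = B 1`), and let `mul` be a bilinear commutative
multiplication on `V` with `a·a = b` and `b·b = a`.  Then `(V, mul)` satisfies the Jordan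
identity `((x·x)·y)·x = (x·x)·(y·x)` if and only if `mul` is associative. -/
theorem jordan_iff_associative {k V : Type*} [Field k] [AddCommGroup V] [Module k V]
    (B : Module.Basis (Fin 2) k V) (mul : V →ₗ[k] V →ₗ[k] V)
    (hcomm : ∀ x y : V, mul x y = mul y x)
    (haa : mul (B 0) (B 0) = B 1) (hbb : mul (B 1) (B 1) = B 0) :
    (∀ x y : V, mul (mul (mul x x) y) x = mul (mul x x) (mul y x)) ↔
      (∀ x y z : V, mul (mul x y) z = mul x (mul y z)) := by
  constructor
  · intro h
    have h0 := h (B 0) (B 0)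
    rw [haa, hbb, hcomm (B 1) (B 0)] at h0
    -- h0 : mul (mul (B 0) (B 1)) (B 0) = B 0
    have h1 := h (B 1) (B 1)
    rw [hbb, haa] at h1
    -- h1 : mul (mul (B 0) (B 1)) (B 1) = B 1
    have hba : mul (B 1) (B 0) = mul (B 0) (B 1) := hcomm _ _
    have hac : mul (B 0) (mul (B 0) (B 1)) = B 0 := (hcomm _ _).trans h0
    have hbc : mul (B 1) (mul (B 0) (B 1)) = B 1 := (hcomm _ _).trans h1
    have key : mul.compr₂ mul = ((LinearMap.llcomp k V V V).comp mul).compl₂ mul := by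
      refine B.ext fun i => B.ext fun j => B.ext fun l => ?_
      fin_cases i <;> fin_cases j <;> fin_cases l <;>
        simp only [LinearMap.compr₂_apply, LinearMap.compl₂_apply, LinearMap.coe_comp,
          Function.comp_apply, LinearMap.llcomp_apply, Fin.isValue, Fin.zero_eta, Fin.mk_one] <;>
        simp only [haa, hbb, hba, h0, hac, h1, hbc]
    intro x y z
    have := DFunLike.congr_fun (DFunLike.congr_fun (DFunLike.congr_fun key x) y) z
    simpa using this
  · intro h x y
    exact h (mul x x) y x
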